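/- Let V be a finite-dimensional real vector space, T : V × V × V → ℝ a symmetric trilinear form, ν : V → ℝ a linear form, and ξ a quadratic form on V with associated symmetric bilinear form B, such that T(x,x,x) = ν(x)·ξ(x) for all x ∈ V. Suppose there exists ω ∈ V such that the bilinear form (y,z) ↦ T(ω,y,z) is nondegenerate, and suppose ξ is degenerate, i.e. there exists a nonzero v ∈ V with B(v,y) = 0 for all y ∈ V. Then the restriction of B to the hyperplane ker ν = {x ∈ V : ν(x) = 0} is nondegenerate: if w ∈ ker ν satisfies B(w,u) = 0 for every u ∈ ker ν, then w = 0. -/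

import Mathlib

/-- If a symmetric trilinear form `T` factors as `T(x,x,x) = ν(x)·ξ(x)`, the bilinear
form `T(ω,·,·)` is nondegenerate for some `ω`, and the quadratic form `ξ` (with
associated symmetric bilinear form `B`) is degenerate, then the restriction of `B`
to the hyperplane `ker ν` is nondegenerate. -/
theorem restriction_nondegenerate {V : Type*} [AddCommGroup V] [Module ℝ V]
    [FiniteDimensional ℝ V]
    (T : V →ₗ[ℝ] V →ₗ[ℝ] V →ₗ[ℝ] ℝ)
    (hTsymm1 : ∀ x y z : V, T x y z = T y x z)
    (hTsymm2 : ∀ x y z : V, T x y z = T x z y)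
    (ν : V →ₗ[ℝ] ℝ) (ξ : QuadraticForm ℝ V) (B : LinearMap.BilinForm ℝ V)
    (hBsymm : ∀ x y : V, B x y = B y x)
    (hBξ : ∀ x : V, B x x = ξ x)
    (hfact : ∀ x : V, T x x x = ν x * ξ x)
    (ω : V) (hω : ∀ v : V, (∀ y : V, T ω v y = 0) → v = 0)
    (v : V) (hv0 : v ≠ 0) (hvrad : ∀ y : V, B v y = 0) :
    ∀ w : V, ν w = 0 → (∀ u : V, ν u = 0 → B w u = 0) → w = 0 := by
  intro w hw hwu
  have hfact' : ∀ x : V, T x x x = ν x * B x x := by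
    intro x; rw [hfact, hBξ]
  -- Polarization identity
  have key : ∀ x y z : V, 3 * T x y z = ν x * B y z + ν y * B x z + ν z * B x y := by
    intro x y z
    have h1 := hfact' (x + y + z)
    have h2 := hfact' (x + y)
    have h3 := hfact' (x + z)
    have h4 := hfact' (y + z)
    have hx := hfact' x
    have hy := hfact' y
    have hz := hfact' z
    simp only [map_add, LinearMap.add_apply] at h1 h2 h3 h4
    simp only [hTsymm1, hTsymm2, hBsymm] at *
    linarith
  -- ν v ≠ 0
  have hνv : ν v ≠ 0 := by
    intro hνv0
    apply hv0
    apply hω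
    intro y
    have hk := key ω v y
    have h1 : B v y = 0 := hvrad y
    have h2 : B ω v = 0 := by rw [hBsymm]; exact hvrad ω
    rw [h1, h2, hνv0] at hk
    linarith
  -- w is in the radical of B
  have hwrad : ∀ y : V, B w y = 0 := by
    intro y
    have hdec : y = (y - (ν y / ν v) • v) + (ν y / ν v) • v := by abel
    have hker : ν (y - (ν y / ν v) • v) = 0 := by
      simp [map_sub, map_smul]
      field_simp
      ring
    have h1 : B w (y - (ν y / ν v) • v) = 0 := hwu _ hker
    have h2 : B w v = 0 := by rw [hBsymm]; exact hvrad w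
    calc B w y = B w ((y - (ν y / ν v) • v) + (ν y / ν v) • v) := by rw [← hdec]
      _ = B w (y - (ν y / ν v) • v) + (ν y / ν v) * B w v := by
          rw [map_add, map_smul]; rfl
      _ = 0 := by rw [h1, h2]; ring
  -- conclude w = 0
  apply hω
  intro y
  have hk := key ω w y
  have h1 : B w y = 0 := hwrad y
  have h2 : B ω w = 0 := by rw [hBsymm]; exact hwrad ω
  rw [h1, h2, hw] at hk
  linarith
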